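/- Let F ⊂ ℂ be a field and n a positive integer. A function D: F → ℂ is a derivation of order n (i.e. D ∈ D_n(F)) if and only if D is additive on F, D(1) = 0, and the map x ↦ D(x)/x from the multiplicative group F^× to ℂ is a generalized polynomial of degree at most n on F^×. -/

import Mathlib

/-- `f : F → ℂ` is a derivation of order `n` (an element of `D_n(F)`).  The identically
zero map is the only derivation of order `0`; `f` is a derivation of order `n + 1` if it is
additive and there is a `B : F × F → ℂ`, a derivation of order `n` in each variable, with
`f(xy) − x f(y) − f(x) y = B(x,y)`. -/
def IsDerOfOrder (F : Subfield ℂ) : ℕ → (F → ℂ) → Prop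
  | 0, f => ∀ x, f x = 0
  | n + 1, f =>
      (∀ x y : F, f (x + y) = f x + f y) ∧
      ∃ B : F → F → ℂ,
        (∀ x : F, IsDerOfOrder F n (fun y => B x y)) ∧
        (∀ y : F, IsDerOfOrder F n (fun x => B x y)) ∧
        ∀ x y : F, f (x * y) - (x : ℂ) * f y - f x * (y : ℂ) = B x y

/-- `A : G^k → ℂ` is symmetric and `k`-additive on the (multiplicatively written)
commutative group `G`. -/
def IsSymKAdditiveMul (G : Type*) [CommGroup G] (k : ℕ) (A : (Fin k → G) → ℂ) : Prop :=
  (∀ (σ : Equiv.Perm (Fin k)) (x : Fin k → G), A (x ∘ σ) = A x) ∧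
  (∀ (x : Fin k → G) (i : Fin k) (y z : G),
    A (Function.update x i (y * z)) = A (Function.update x i y) + A (Function.update x i z))

/-- `P : G → ℂ` is a generalized polynomial of degree at most `n` on the commutative group
`G`. -/
def IsGenPolyOfDegLE (G : Type*) [CommGroup G] (n : ℕ) (P : G → ℂ) : Prop :=
  ∃ A : (k : ℕ) → (Fin k → G) → ℂ,
    (∀ k, k ≤ n → IsSymKAdditiveMul G k (A k)) ∧
    ∀ x : G, P x = ∑ k ∈ Finset.range (n + 1), A k (fun _ => x)

open Finset

section DiffCalc

variable {G : Type*} [CommGroup G]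

/-- difference operator -/
def dlt (h : G) (P : G → ℂ) : G → ℂ := fun x => P (x * h) - P x

/-- degree at most n in the Fréchet sense -/
def DegLE : ℕ → {G : Type*} → [inst : CommGroup G] → (G → ℂ) → Prop
  | 0, _, _, P => ∀ x h, P (x * h) = P x
  | n+1, _, _, P => ∀ h, DegLE n (dlt h P)

/-- iterated difference -/
def iterD : (k : ℕ) → (Fin k → G) → (G → ℂ) → (G → ℂ)
  | 0, _, P => P
  | k+1, h, P => iterD k (fun i => h i.succ) (dlt (h 0) P)

lemma dlt_comm (g h : G) (P : G → ℂ) : dlt g (dlt h P) = dlt h (dlt g P) := by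
  funext x
  simp only [dlt]
  rw [mul_right_comm]
  ring

lemma dlt_congr {P Q : G → ℂ} (h : ∀ x, P x = Q x) (g : G) : ∀ x, dlt g P x = dlt g Q x := by
  intro x; simp only [dlt, h]

lemma DegLE_congr : ∀ (n : ℕ) {P Q : G → ℂ}, (∀ x, P x = Q x) → DegLE n P → DegLE n Q := by
  intro n
  induction n with
  | zero => intro P Q h hP x g; rw [← h, ← h]; exact hP x g
  | succ n ih => intro P Q h hP g; exact ih (dlt_congr h g) (hP g)

lemma DegLE_add : ∀ (n : ℕ) {P Q : G → ℂ}, DegLE n P → DegLE n Q →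
    DegLE n (fun x => P x + Q x) := by
  intro n
  induction n with
  | zero => intro P Q hP hQ x g; simp only [hP x g, hQ x g]
  | succ n ih =>
      intro P Q hP hQ g
      exact DegLE_congr n (fun x => by simp only [dlt]; ring) (ih (hP g) (hQ g))

lemma DegLE_smul : ∀ (n : ℕ) (c : ℂ) {P : G → ℂ}, DegLE n P → DegLE n (fun x => c * P x) := by
  intro n
  induction n with
  | zero => intro c P hP x g; simp only [hP x g]
  | succ n ih =>
      intro c P hP g
      exact DegLE_congr n (fun x => by simp only [dlt]; ring) (ih c (hP g))

lemma DegLE_const (n : ℕ) (c : ℂ) : DegLE n (fun _ : G => c) := by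
  induction n generalizing c with
  | zero => intro x g; rfl
  | succ n ih => intro g; exact DegLE_congr n (fun x => by simp [dlt]) (ih 0)

lemma DegLE_dlt : ∀ (n : ℕ) {P : G → ℂ} (g : G), DegLE n P → DegLE n (dlt g P) := by
  intro n
  induction n with
  | zero =>
      intro P g hP x h
      simp only [dlt]
      rw [mul_right_comm, hP (x*g) h, hP x h]
  | succ n ih =>
      intro P g hP h
      have := ih g (hP h)
      exact DegLE_congr n (fun x => by rw [dlt_comm]) this

lemma DegLE_succ (n : ℕ) {P : G → ℂ} (hP : DegLE n P) : DegLE (n+1) P :=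
  fun g => DegLE_dlt n g hP

lemma DegLE_mono {k n : ℕ} (hkn : k ≤ n) {P : G → ℂ} (hP : DegLE k P) : DegLE n P := by
  induction hkn with
  | refl => exact hP
  | step _ ih => exact DegLE_succ _ ih

lemma DegLE_sub (n : ℕ) {P Q : G → ℂ} (hP : DegLE n P) (hQ : DegLE n Q) :
    DegLE n (fun x => P x - Q x) := by
  have := DegLE_add n hP (DegLE_smul n (-1) hQ)
  exact DegLE_congr n (fun x => by ring) this

lemma DegLE_sum {ι : Type*} (n : ℕ) (s : Finset ι) (f : ι → G → ℂ)
    (hf : ∀ i ∈ s, DegLE n (f i)) : DegLE n (fun x => ∑ i ∈ s, f i x) := by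
  classical
  induction s using Finset.induction_on with
  | empty => exact DegLE_congr n (fun x => by simp) (DegLE_const n 0)
  | insert a s hns ih =>
      have := DegLE_add n (hf a (mem_insert_self a s))
        (ih (fun i hi => hf i (mem_insert_of_mem hi)))
      exact DegLE_congr n (fun x => by rw [Finset.sum_insert hns]) this

end DiffCalc

section IterD

variable {G : Type*} [CommGroup G]

lemma iterD_succ (k : ℕ) (h : Fin (k+1) → G) (P : G → ℂ) :
    iterD (k+1) h P = iterD k (fun i => h i.succ) (dlt (h 0) P) := rfl

lemma iterD_congr : ∀ (k : ℕ) (h : Fin k → G) {P Q : G → ℂ}, (∀ x, P x = Q x) →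
    ∀ x, iterD k h P x = iterD k h Q x := by
  intro k
  induction k with
  | zero => intro h P Q hPQ x; exact hPQ x
  | succ k ih => intro h P Q hPQ x; exact ih _ (dlt_congr hPQ _) x

lemma iterD_add : ∀ (k : ℕ) (h : Fin k → G) (P Q : G → ℂ) (x : G),
    iterD k h (fun y => P y + Q y) x = iterD k h P x + iterD k h Q x := by
  intro k
  induction k with
  | zero => intro h P Q x; rfl
  | succ k ih =>
      intro h P Q x
      rw [show iterD (k+1) h (fun y => P y + Q y) x
          = iterD k (fun i => h i.succ) (dlt (h 0) (fun y => P y + Q y)) x from rfl]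
      rw [iterD_congr k _ (fun y => by simp only [dlt]; ring :
        ∀ y, dlt (h 0) (fun y => P y + Q y) y = (fun y => dlt (h 0) P y + dlt (h 0) Q y) y)]
      exact ih _ _ _ x

lemma iterD_smul : ∀ (k : ℕ) (h : Fin k → G) (c : ℂ) (P : G → ℂ) (x : G),
    iterD k h (fun y => c * P y) x = c * iterD k h P x := by
  intro k
  induction k with
  | zero => intro h c P x; rfl
  | succ k ih =>
      intro h c P x
      rw [show iterD (k+1) h (fun y => c * P y) x
          = iterD k (fun i => h i.succ) (dlt (h 0) (fun y => c * P y)) x from rfl]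
      rw [iterD_congr k _ (fun y => by simp only [dlt]; ring :
        ∀ y, dlt (h 0) (fun y => c * P y) y = (fun y => c * dlt (h 0) P y) y)]
      exact ih _ _ _ x

lemma iterD_zero_fun (k : ℕ) (h : Fin k → G) (x : G) :
    iterD k h (fun _ => (0:ℂ)) x = 0 := by
  have := iterD_smul k h 0 (fun _ => (0:ℂ)) x
  simpa using this

lemma iterD_sub (k : ℕ) (h : Fin k → G) (P Q : G → ℂ) (x : G) :
    iterD k h (fun y => P y - Q y) x = iterD k h P x - iterD k h Q x := by
  have h1 := iterD_add k h P (fun y => (-1) * Q y) x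
  have h2 := iterD_smul k h (-1) Q x
  have h3 := iterD_congr k h (fun y => by ring :
    ∀ y, (fun y => P y - Q y) y = (fun y => P y + (-1) * Q y) y) x
  rw [h3, h1, h2]; ring

lemma iterD_sum {ι : Type*} (k : ℕ) (h : Fin k → G) (s : Finset ι) (f : ι → G → ℂ) (x : G) :
    iterD k h (fun y => ∑ i ∈ s, f i y) x = ∑ i ∈ s, iterD k h (f i) x := by
  classical
  induction s using Finset.induction_on with
  | empty => simpa using iterD_zero_fun k h x
  | insert a s hns ih =>
      rw [Finset.sum_insert hns, ← ih,
        ← iterD_add k h (f a) (fun y => ∑ i ∈ s, f i y) x]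
      exact iterD_congr k h (fun y => by rw [Finset.sum_insert hns]) x

lemma iterD_vanish : ∀ (n : ℕ) {P : G → ℂ}, DegLE n P →
    ∀ (h : Fin (n+1) → G) (x : G), iterD (n+1) h P x = 0 := by
  intro n
  induction n with
  | zero => intro P hP h x; exact sub_eq_zero_of_eq (hP x (h 0))
  | succ n ih =>
      intro P hP h x
      rw [iterD_succ]
      exact ih (hP (h 0)) _ x

lemma iterD_vanish_conv : ∀ (n : ℕ) {P : G → ℂ},
    (∀ (h : Fin (n+1) → G) (x : G), iterD (n+1) h P x = 0) → DegLE n P := by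
  intro n
  induction n with
  | zero =>
      intro P hP x g
      have := hP (fun _ => g) x
      exact sub_eq_zero.mp this
  | succ n ih =>
      intro P hP g
      apply ih
      intro h x
      have := hP (Fin.cons g h) x
      rw [iterD_succ] at this
      simp only [Fin.cons_succ, Fin.cons_zero] at this
      exact this

lemma iterD_basept : ∀ (n : ℕ) {P : G → ℂ}, DegLE n P →
    ∀ (h : Fin n → G) (x : G), iterD n h P x = iterD n h P 1 := by
  intro n
  induction n with
  | zero =>
      intro P hP h x
      show P x = P 1
      rw [← one_mul x, hP 1 x]
  | succ n ih =>
      intro P hP h x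
      rw [iterD_succ]
      exact ih (hP (h 0)) _ x

end IterD

section Perm

variable {G : Type*} [CommGroup G]

lemma swap_succ {m : ℕ} (a b i : Fin m) :
    (Equiv.swap a.succ b.succ) i.succ = (Equiv.swap a b i).succ := by
  rcases eq_or_ne i a with rfl | hia
  · rw [Equiv.swap_apply_left, Equiv.swap_apply_left]
  rcases eq_or_ne i b with rfl | hib
  · rw [Equiv.swap_apply_right, Equiv.swap_apply_right]
  rw [Equiv.swap_apply_of_ne_of_ne (fun hh => hia (Fin.succ_injective _ hh))
      (fun hh => hib (Fin.succ_injective _ hh)),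
    Equiv.swap_apply_of_ne_of_ne hia hib]

lemma iterD_tuple_congr {k : ℕ} {h1 h2 : Fin k → G} (hh : ∀ i, h1 i = h2 i)
    (P : G → ℂ) (x : G) : iterD k h1 P x = iterD k h2 P x := by
  rw [funext hh]

lemma iterD_swap01 {k : ℕ} (h : Fin (k+2) → G) (P : G → ℂ) (x : G) :
    iterD (k+2) (h ∘ Equiv.swap 0 1) P x = iterD (k+2) h P x := by
  rw [iterD_succ, iterD_succ, iterD_succ, iterD_succ]
  have h20 : ∀ i : Fin k, (i.succ.succ : Fin (k+2)) ≠ 0 := fun i => Fin.succ_ne_zero _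
  have h21 : ∀ i : Fin k, (i.succ.succ : Fin (k+2)) ≠ 1 := by
    intro i
    rw [← Fin.succ_zero_eq_one]
    exact fun hh => Fin.succ_ne_zero _ (Fin.succ_injective _ hh)
  have e0 : (h ∘ Equiv.swap 0 1) 0 = h 1 := by
    simp only [Function.comp_apply, Equiv.swap_apply_left]
  have e0' : (h ∘ Equiv.swap 0 1) ((0 : Fin (k+1)).succ) = h 0 := by
    simp only [Function.comp_apply, Fin.succ_zero_eq_one, Equiv.swap_apply_right]
  rw [e0, e0']
  refine Eq.trans ?_ (iterD_congr k _ (fun y => by rw [dlt_comm]) x)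
  exact iterD_tuple_congr (fun i => by
    simp only [Function.comp_apply, Equiv.swap_apply_of_ne_of_ne (h20 i) (h21 i)]) _ x

lemma iterD_perm : ∀ (k : ℕ) (σ : Equiv.Perm (Fin k)) (h : Fin k → G) (P : G → ℂ) (x : G),
    iterD k (h ∘ σ) P x = iterD k h P x := by
  intro k
  induction k with
  | zero => intro σ h P x; rfl
  | succ k ih =>
      cases k with
      | zero =>
          intro σ h P x
          have : h ∘ σ = h := funext fun i => by
            have h1 : σ i = i := (Fin.eq_zero _).trans (Fin.eq_zero _).symm
            simp only [Function.comp_apply, h1]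
          rw [this]
      | succ m =>
          have hswap : ∀ (p : Fin (m+2)) (h : Fin (m+2) → G) (P : G → ℂ) (x : G),
              iterD (m+2) (h ∘ Equiv.swap 0 p) P x = iterD (m+2) h P x := by
            have hlift : ∀ (r : Fin m) (g : Fin (m+2) → G) (P : G → ℂ) (x : G),
                iterD (m+2) (g ∘ Equiv.swap 1 r.succ.succ) P x = iterD (m+2) g P x := by
              intro r g P x
              rw [iterD_succ, iterD_succ (h := g)]
              have hσ0 : (g ∘ Equiv.swap 1 r.succ.succ) 0 = g 0 := by
                simp only [Function.comp_apply]
                rw [Equiv.swap_apply_of_ne_of_ne (by exact zero_ne_one) (Fin.succ_ne_zero _).symm]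
              rw [hσ0]
              have hfun : (fun i : Fin (m+1) => (g ∘ Equiv.swap 1 r.succ.succ) i.succ)
                  = (fun j : Fin (m+1) => g j.succ) ∘ (Equiv.swap 0 r.succ) := by
                funext i
                simp only [Function.comp_apply]
                rw [show (1 : Fin (m+2)) = (0 : Fin (m+1)).succ from (Fin.succ_zero_eq_one).symm,
                  swap_succ]
              rw [hfun, ih]
            intro p
            induction p using Fin.cases with
            | zero =>
                intro h P x
                rw [Equiv.swap_self]
                exact iterD_tuple_congr (fun i => rfl) P x
            | succ q =>
                induction q using Fin.cases with
                | zero =>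
                    intro h P x
                    rw [Fin.succ_zero_eq_one]
                    exact iterD_swap01 h P x
                | succ r =>
                    intro h P x
                    have hp0 : (r.succ.succ : Fin (m+2)) ≠ 0 := Fin.succ_ne_zero _
                    have hp1 : (r.succ.succ : Fin (m+2)) ≠ 1 := by
                      rw [← Fin.succ_zero_eq_one]
                      exact fun hh => Fin.succ_ne_zero _ (Fin.succ_injective _ hh)
                    have key : Equiv.swap (0 : Fin (m+2)) r.succ.succ
                        = Equiv.swap 0 1 * Equiv.swap 1 r.succ.succ * Equiv.swap 0 1 := by
                      have := Equiv.swap_apply_apply (Equiv.swap (0 : Fin (m+2)) 1) 1 r.succ.succ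
                      rw [Equiv.swap_apply_right,
                        Equiv.swap_apply_of_ne_of_ne hp0 hp1] at this
                      rw [this, Equiv.swap_inv]
                    rw [key]
                    have hcomp : h ∘ ⇑((Equiv.swap (0:Fin (m+2)) 1 * Equiv.swap 1 r.succ.succ
                        * Equiv.swap 0 1 : Equiv.Perm (Fin (m+2))))
                        = ((h ∘ Equiv.swap 0 1) ∘ Equiv.swap 1 r.succ.succ) ∘ Equiv.swap 0 1 := by
                      funext j; rfl
                    rw [hcomp, iterD_swap01, hlift, iterD_swap01]
          intro σ h P x
          have hσ : Equiv.Perm.decomposeFin.symm (Equiv.Perm.decomposeFin σ) = σ :=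
            Equiv.symm_apply_apply _ σ
          set p := (Equiv.Perm.decomposeFin σ).1 with hp
          set τ := (Equiv.Perm.decomposeFin σ).2 with hτ
          have h0 : σ 0 = p := by
            conv_lhs => rw [← hσ]
            exact Equiv.Perm.decomposeFin_symm_apply_zero p τ
          have hs : ∀ i : Fin (m+1), σ i.succ = Equiv.swap 0 p (τ i).succ := by
            intro i
            conv_lhs => rw [← hσ]
            exact Equiv.Perm.decomposeFin_symm_apply_succ τ p i
          rw [iterD_succ, iterD_succ (h := h)]
          have e0 : (h ∘ σ) 0 = h p := by simp only [Function.comp_apply, h0]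
          rw [e0]
          have hfun : (fun i : Fin (m+1) => (h ∘ σ) i.succ)
              = (fun i : Fin (m+1) => h (Equiv.swap 0 p i.succ)) ∘ τ := by
            funext i
            simp only [Function.comp_apply, hs i]
          rw [hfun, ih]
          have := hswap p h P x
          rw [iterD_succ] at this
          have e0' : (h ∘ Equiv.swap 0 p) 0 = h p := by
            simp only [Function.comp_apply, Equiv.swap_apply_left]
          rw [e0'] at this
          exact this

end Perm

section Expand

variable {G : Type*} [CommGroup G] {k : ℕ} {A : (Fin k → G) → ℂ}

/-- multi-additive expansion over a set of slots -/
lemma expand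
    (hA : ∀ (x : Fin k → G) (i : Fin k) (y z : G),
      A (Function.update x i (y * z)) = A (Function.update x i y) + A (Function.update x i z)) :
    ∀ (T : Finset (Fin k)) (u v : Fin k → G),
      A (fun i => if i ∈ T then u i * v i else u i)
        = ∑ S ∈ T.powerset, A (fun i => if i ∈ S then v i else u i) := by
  intro T
  induction T using Finset.induction_on with
  | empty =>
      intro u v
      simp only [Finset.notMem_empty, if_false, Finset.powerset_empty, Finset.sum_singleton]
  | insert a T hns ih =>
      intro u v
      have e1 : (fun i => if i ∈ insert a T then u i * v i else u i)
          = Function.update (fun i => if i ∈ T then u i * v i else u i) a (u a * v a) := by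
        funext i
        rcases eq_or_ne i a with rfl | hia
        · simp [Function.update_self, hns]
        · simp [Function.update_of_ne hia, Finset.mem_insert, hia]
      have e2 : Function.update (fun i => if i ∈ T then u i * v i else u i) a (u a)
          = (fun i => if i ∈ T then u i * v i else u i) := by
        funext i
        rcases eq_or_ne i a with rfl | hia
        · simp [Function.update_self, hns]
        · simp [Function.update_of_ne hia]
      have e3 : Function.update (fun i => if i ∈ T then u i * v i else u i) a (v a)
          = (fun i => if i ∈ T then (Function.update u a (v a)) i * v i
              else (Function.update u a (v a)) i) := by
        funext i
        rcases eq_or_ne i a with rfl | hia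
        · simp [Function.update_self, hns]
        · simp [Function.update_of_ne hia]
      rw [e1, hA, e2, e3, ih, ih, Finset.sum_powerset_insert hns]
      congr 1
      apply Finset.sum_congr rfl
      intro S hS
      have haS : a ∉ S := fun hc => hns (Finset.mem_powerset.mp hS hc)
      congr 1
      funext i
      rcases eq_or_ne i a with rfl | hia
      · simp [Function.update_self, haS]
      · simp [Function.update_of_ne hia, Finset.mem_insert, hia]

lemma degle_slots
    (hA : ∀ (x : Fin k → G) (i : Fin k) (y z : G),
      A (Function.update x i (y * z)) = A (Function.update x i y) + A (Function.update x i z)) :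
    ∀ (n : ℕ) (T : Finset (Fin k)) (c : Fin k → G), T.card ≤ n →
      DegLE n (fun x => A (fun i => if i ∈ T then x else c i)) := by
  intro n
  induction n with
  | zero =>
      intro T c hT
      have : T = ∅ := Finset.card_eq_zero.mp (Nat.le_zero.mp hT)
      subst this
      intro x g
      simp only [Finset.notMem_empty, if_false]
  | succ n ih =>
      intro T c hT g
      have key : ∀ x, dlt g (fun x => A (fun i => if i ∈ T then x else c i)) x
          = ∑ S ∈ T.powerset.erase ∅,
              A (fun i => if i ∈ T \ S then x else (if i ∈ S then g else c i)) := by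
        intro x
        have e1 : (fun i => if i ∈ T then x * g else c i)
            = (fun i => if i ∈ T then (if i ∈ T then x else c i) * (fun _ => g) i
                else (if i ∈ T then x else c i)) := by
          funext i; by_cases hi : i ∈ T <;> simp [hi]
        have e2 := expand hA T (fun i => if i ∈ T then x else c i) (fun _ => g)
        rw [← e1] at e2
        have e3 : ∑ S ∈ (T.powerset).erase ∅,
              A (fun i => if i ∈ S then g else (if i ∈ T then x else c i))
            + A (fun i => if i ∈ (∅ : Finset (Fin k)) then g else (if i ∈ T then x else c i))
            = ∑ S ∈ T.powerset,
              A (fun i => if i ∈ S then g else (if i ∈ T then x else c i)) :=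
          Finset.sum_erase_add _ _ (Finset.empty_mem_powerset T)
        simp only [dlt, e2, ← e3, Finset.notMem_empty, if_false]
        rw [add_sub_cancel_right]
        apply Finset.sum_congr rfl
        intro S hS
        have hST : S ⊆ T := Finset.mem_powerset.mp (Finset.mem_of_mem_erase hS)
        congr 1
        funext i
        by_cases hiS : i ∈ S
        · have hiT : i ∈ T := hST hiS
          simp [hiS, Finset.mem_sdiff, hiT]
        · by_cases hiT : i ∈ T <;> simp [hiS, hiT, Finset.mem_sdiff]
      refine DegLE_congr n (fun x => (key x).symm) ?_
      apply DegLE_sum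
      intro S hS
      have hSne : S ≠ ∅ := Finset.ne_of_mem_erase hS
      have hST : S ⊆ T := Finset.mem_powerset.mp (Finset.mem_of_mem_erase hS)
      have hcard : (T \ S).card ≤ n := by
        have h1 : (T \ S).card = T.card - S.card := Finset.card_sdiff_of_subset hST
        have h2 : 1 ≤ S.card := Finset.card_pos.mpr (Finset.nonempty_of_ne_empty hSne)
        omega
      exact ih (T \ S) _ hcard

lemma degle_diag
    (hA : ∀ (x : Fin k → G) (i : Fin k) (y z : G),
      A (Function.update x i (y * z)) = A (Function.update x i y) + A (Function.update x i z)) :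
    DegLE k (fun x => A (fun _ => x)) := by
  have := degle_slots hA k Finset.univ (fun _ => 1) (by simp)
  refine DegLE_congr k (fun x => ?_) this
  congr 1
  funext i
  simp

end Expand

section Polar

variable {G : Type*} [CommGroup G]

lemma polar : ∀ (k : ℕ) (A : (Fin k → G) → ℂ), IsSymKAdditiveMul G k A →
    ∀ (h : Fin k → G), iterD k h (fun x => A (fun _ => x)) 1 = (k.factorial : ℂ) * A h := by
  intro k
  induction k with
  | zero =>
      intro A hA h
      show A (fun _ => 1) = (Nat.factorial 0 : ℂ) * A h
      rw [show (fun _ => (1:G)) = h from funext fun i => i.elim0]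
      simp
  | succ k ih =>
      intro A hA h
      rw [iterD_succ]
      -- Step 1: expand the difference
      have step1 : ∀ x, dlt (h 0) (fun x => A (fun _ => x)) x
          = ∑ S ∈ (Finset.univ : Finset (Fin (k+1))).powerset.erase ∅,
              A (fun i => if i ∈ S then h 0 else x) := by
        intro x
        have e2 := expand hA.2 Finset.univ (fun _ => x) (fun _ => h 0)
        have e1 : (fun i : Fin (k+1) => if i ∈ Finset.univ then
            (fun _ : Fin (k+1) => x) i * (fun _ : Fin (k+1) => h 0) i
            else (fun _ : Fin (k+1) => x) i) = (fun _ => x * h 0) := by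
          funext i; simp
        rw [e1] at e2
        have e3 : ∑ S ∈ ((Finset.univ : Finset (Fin (k+1))).powerset).erase ∅,
              A (fun i => if i ∈ S then h 0 else x)
            + A (fun i => if i ∈ (∅ : Finset (Fin (k+1))) then h 0 else x)
            = ∑ S ∈ (Finset.univ : Finset (Fin (k+1))).powerset,
              A (fun i => if i ∈ S then h 0 else x) :=
          Finset.sum_erase_add _ _ (Finset.empty_mem_powerset _)
        simp only [Finset.notMem_empty, if_false] at e3
        simp only [dlt, e2, ← e3]
        ring
      rw [iterD_congr k _ step1, iterD_sum]
      -- Step 3: only singletons survive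
      have hsub : ((Finset.univ : Finset (Fin (k+1))).powerset.erase ∅).filter
          (fun S => S.card = 1) ⊆ (Finset.univ : Finset (Fin (k+1))).powerset.erase ∅ :=
        Finset.filter_subset _ _
      rw [← Finset.sum_subset hsub ?vanish]
      case vanish =>
        intro S hS hSf
        have hSne : S ≠ ∅ := Finset.ne_of_mem_erase hS
        have hc1 : S.card ≠ 1 := by
          intro hc; exact hSf (Finset.mem_filter.mpr ⟨hS, hc⟩)
        have hc2 : 2 ≤ S.card := by
          have := Finset.card_pos.mpr (Finset.nonempty_of_ne_empty hSne)
          omega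
      -- the function is a diagonal of ≤ k-1 slots
        have hcard : ((Finset.univ : Finset (Fin (k+1))) \ S).card + 1 ≤ k := by
          have h1 : ((Finset.univ : Finset (Fin (k+1))) \ S).card
              = (k+1) - S.card := by
            rw [Finset.card_sdiff_of_subset (Finset.subset_univ S)]
            simp
          have h3 : S.card ≤ k + 1 := by
            simpa using Finset.card_le_card (Finset.subset_univ S)
          omega
        obtain ⟨m, rfl⟩ : ∃ m, k = m + 1 := ⟨k - 1, by omega⟩
        have hdeg : DegLE ((Finset.univ \ S).card)
            (fun x => A (fun i => if i ∈ Finset.univ \ S then x else h 0)) :=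
          degle_slots hA.2 _ _ (fun _ => h 0) le_rfl
        have hdeg2 : DegLE m
            (fun x => A (fun i => if i ∈ Finset.univ \ S then x else h 0)) :=
          DegLE_mono (by omega) hdeg
        have hfe : ∀ x : G, (fun i => if i ∈ S then h 0 else x)
            = (fun i => if i ∈ Finset.univ \ S then x else h 0) := by
          intro x; funext i
          by_cases hi : i ∈ S <;> simp [hi, Finset.mem_sdiff]
        refine Eq.trans (iterD_congr _ _ (fun x => by rw [hfe x]) 1) ?_
        exact iterD_vanish m hdeg2 _ 1
      -- Step 4: identify filter with image of singletons
      have himg : ((Finset.univ : Finset (Fin (k+1))).powerset.erase ∅).filter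
          (fun S => S.card = 1)
          = Finset.univ.image (fun j : Fin (k+1) => ({j} : Finset (Fin (k+1)))) := by
        ext S
        simp only [Finset.mem_filter, Finset.mem_erase, Finset.mem_powerset,
          Finset.mem_image, Finset.mem_univ, true_and, Finset.card_eq_one]
        constructor
        · rintro ⟨⟨_, _⟩, j, rfl⟩; exact ⟨j, rfl⟩
        · rintro ⟨j, rfl⟩
          exact ⟨⟨Finset.singleton_ne_empty j, Finset.subset_univ _⟩, j, rfl⟩
      rw [himg, Finset.sum_image (fun a _ b _ hab => Finset.singleton_injective hab)]
      -- Step 5/6/7: each singleton term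
      set B : (Fin k → G) → ℂ := fun y => A (Fin.cons (h 0) y) with hB
      have hBsym : IsSymKAdditiveMul G k B := by
        constructor
        · intro σ y
          have : Fin.cons (h 0) (y ∘ σ)
              = (Fin.cons (h 0) y) ∘ (Equiv.Perm.decomposeFin.symm (0, σ)) := by
            funext i
            induction i using Fin.cases with
            | zero =>
                simp only [Function.comp_apply, Equiv.Perm.decomposeFin_symm_apply_zero,
                  Fin.cons_zero]
            | succ i =>
                simp only [Function.comp_apply, Equiv.Perm.decomposeFin_symm_apply_succ,
                  Fin.cons_succ, Equiv.swap_self, Equiv.refl_apply]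
        -- goal
          show A (Fin.cons (h 0) (y ∘ σ)) = A (Fin.cons (h 0) y)
          rw [this]
          exact hA.1 _ _
        · intro y i a b
          show A (Fin.cons (h 0) (Function.update y i (a*b)))
            = A (Fin.cons (h 0) (Function.update y i a)) + A (Fin.cons (h 0) (Function.update y i b))
          rw [Fin.cons_update, Fin.cons_update, Fin.cons_update]
          exact hA.2 _ _ _ _
      have hterm : ∀ j : Fin (k+1),
          iterD k (fun i => h i.succ) (fun x => A (fun i => if i ∈ ({j} : Finset (Fin (k+1)))
            then h 0 else x)) 1
          = (k.factorial : ℂ) * A h := by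
        intro j
        have e5 : ∀ x : G, (fun i => if i ∈ ({j} : Finset (Fin (k+1))) then h 0 else x)
            = Function.update (fun _ : Fin (k+1) => x) j (h 0) := by
          intro x; funext i
          rcases eq_or_ne i j with rfl | hij
          · simp
          · simp [Function.update_of_ne hij, hij]
        have e6 : ∀ x : G, A (Function.update (fun _ : Fin (k+1) => x) j (h 0))
            = B (fun _ => x) := by
          intro x
          have hup : Function.update (fun _ : Fin (k+1) => x) 0 (h 0)
              = Fin.cons (h 0) (fun _ => x) := by
            funext i
            induction i using Fin.cases with
            | zero => simp
            | succ i => simp [Function.update_of_ne (Fin.succ_ne_zero i)]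
          rcases eq_or_ne j 0 with rfl | hj0
          · rw [hup]
          · have hcomp : (Function.update (fun _ : Fin (k+1) => x) 0 (h 0))
                ∘ (Equiv.swap 0 j) = Function.update (fun _ : Fin (k+1) => x) j (h 0) := by
              funext i
              simp only [Function.comp_apply]
              rcases eq_or_ne i j with rfl | hij
              · rw [Equiv.swap_apply_right]
                simp
              rcases eq_or_ne i 0 with rfl | hi0
              · rw [Equiv.swap_apply_left, Function.update_of_ne hj0,
                  Function.update_of_ne hij]
              · rw [Equiv.swap_apply_of_ne_of_ne hi0 hij, Function.update_of_ne hi0,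
                  Function.update_of_ne hij]
            rw [← hcomp, hA.1 (Equiv.swap 0 j), hup]
        refine Eq.trans (iterD_congr _ _ (fun x => by rw [e5 x, e6 x]) 1) ?_
        rw [ih B hBsym]
        congr 1
        show B (Fin.tail h) = A h
        rw [hB]
        simp only [Fin.cons_self_tail]
      rw [Finset.sum_congr rfl (fun j _ => hterm j)]
      rw [Finset.sum_const, Finset.card_univ, Fintype.card_fin]
      rw [Nat.factorial_succ]
      push_cast
      ring

section CoefC

variable {G : Type*} [CommGroup G]

lemma c_add0 {n : ℕ} {P : G → ℂ} (hP : DegLE (n+1) P) (h : Fin (n+1) → G) (y z : G) :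
    iterD (n+1) (Function.update h 0 (y*z)) P 1
      = iterD (n+1) (Function.update h 0 y) P 1 + iterD (n+1) (Function.update h 0 z) P 1 := by
  have tail_eq : ∀ a : G, (fun i : Fin n => (Function.update h 0 a) i.succ)
      = fun i : Fin n => h i.succ := by
    intro a; funext i; rw [Function.update_of_ne (Fin.succ_ne_zero i)]
  have hval : ∀ a : G, (Function.update h 0 a) 0 = a := fun a => Function.update_self _ _ _
  rw [iterD_succ, iterD_succ, iterD_succ, hval, hval, hval, tail_eq, tail_eq, tail_eq]
  set t := fun i : Fin n => h i.succ with ht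
  have hsplit : ∀ x, dlt (y*z) P x
      = dlt y P x + dlt z P x + dlt z (dlt y P) x := by
    intro x
    simp only [dlt]
    have : x * (y * z) = x * z * y := by rw [mul_comm y z, mul_assoc]
    rw [this]
    ring
  rw [iterD_congr n t hsplit 1]
  have e1 := iterD_add n t (fun x => dlt y P x + dlt z P x) (fun x => dlt z (dlt y P) x) 1
  rw [show (fun x => dlt y P x + dlt z P x + dlt z (dlt y P) x)
      = (fun x => (fun x => dlt y P x + dlt z P x) x + (fun x => dlt z (dlt y P) x) x)
      from rfl, e1, iterD_add n t (dlt y P) (dlt z P) 1]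
  have hvanish : iterD n t (fun x => dlt z (dlt y P) x) 1 = 0 := by
    have e2 : iterD (n+2) (Fin.cons z (Fin.cons y t)) P 1
        = iterD n t (dlt y (dlt z P)) 1 := by
      rw [iterD_succ, iterD_succ]
      simp only [Fin.cons_succ, Fin.cons_zero]
    have e3 := iterD_vanish (n+1) hP (Fin.cons z (Fin.cons y t)) 1
    rw [e2] at e3
    rw [iterD_congr n t (fun x => by rw [dlt_comm]) 1]
    exact e3
  rw [hvanish, add_zero]

lemma c_addi {n : ℕ} {P : G → ℂ} (hP : DegLE (n+1) P) (h : Fin (n+1) → G) (i : Fin (n+1))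
    (y z : G) :
    iterD (n+1) (Function.update h i (y*z)) P 1
      = iterD (n+1) (Function.update h i y) P 1 + iterD (n+1) (Function.update h i z) P 1 := by
  rcases eq_or_ne i 0 with rfl | hi0
  · exact c_add0 hP h y z
  have key : ∀ a : G, Function.update (h ∘ Equiv.swap 0 i) 0 a
      = (Function.update h i a) ∘ (Equiv.swap 0 i) := by
    intro a; funext j
    show Function.update (h ∘ Equiv.swap 0 i) 0 a j
      = Function.update h i a ((Equiv.swap 0 i) j)
    rcases eq_or_ne j 0 with rfl | hj0
    · rw [Function.update_self, Equiv.swap_apply_left, Function.update_self]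
    rcases eq_or_ne j i with rfl | hji
    · rw [Function.update_of_ne hj0, Equiv.swap_apply_right,
        Function.update_of_ne (Ne.symm hi0)]
      simp only [Function.comp_apply, Equiv.swap_apply_right]
    · rw [Function.update_of_ne hj0, Equiv.swap_apply_of_ne_of_ne hj0 hji,
        Function.update_of_ne hji]
      simp only [Function.comp_apply, Equiv.swap_apply_of_ne_of_ne hj0 hji]
  have swap_inv : ∀ a : G, iterD (n+1) (Function.update h i a) P 1
      = iterD (n+1) (Function.update (h ∘ Equiv.swap 0 i) 0 a) P 1 := by
    intro a
    rw [key a, iterD_perm]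
  rw [swap_inv, swap_inv, swap_inv]
  exact c_add0 hP _ y z

end CoefC

section MainEquiv

variable {G : Type*} [CommGroup G]

theorem genpoly_of_degle : ∀ (n : ℕ) (P : G → ℂ), DegLE n P → IsGenPolyOfDegLE G n P := by
  intro n
  induction n with
  | zero =>
      intro P hP
      refine ⟨fun k _ => if k = 0 then P 1 else 0, ?_, ?_⟩
      · intro k hk
        interval_cases k
        constructor
        · intro σ x; rfl
        · intro x i; exact i.elim0
      · intro x
        have h1 : P x = P 1 := by rw [← one_mul x, hP 1 x]
        rw [h1, Finset.sum_range_one]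
        exact (if_pos rfl).symm
  | succ n ihn =>
      intro P hP
      set cA : (Fin (n+1) → G) → ℂ := fun v => iterD (n+1) v P 1 with hcA
      have hcAsym : IsSymKAdditiveMul G (n+1) cA :=
        ⟨fun σ v => iterD_perm (n+1) σ v P 1, fun v i y z => c_addi hP v i y z⟩
      set Astar : G → ℂ := fun x => (((n+1).factorial : ℂ))⁻¹ * cA (fun _ => x) with hAstar
      have hfac : (((n+1).factorial : ℂ)) ≠ 0 := by
        exact_mod_cast Nat.cast_ne_zero.mpr (Nat.factorial_ne_zero (n+1))
      have hQ : DegLE n (fun x => P x - Astar x) := by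
        apply iterD_vanish_conv
        intro h x
        rw [iterD_sub]
        have e1 : iterD (n+1) h P x = cA h := iterD_basept (n+1) hP h x
        have e2 : iterD (n+1) h Astar x = cA h := by
          rw [hAstar]
          rw [iterD_smul (n+1) h _ (fun x => cA (fun _ => x)) x]
          have hdeg : DegLE (n+1) (fun x => cA (fun _ => x)) := degle_diag hcAsym.2
          rw [iterD_basept (n+1) hdeg h x, polar (n+1) cA hcAsym h]
          field_simp
        rw [e1, e2, sub_self]
      obtain ⟨A, hA1, hA2⟩ := ihn _ hQ
      set A' : (k : ℕ) → (Fin k → G) → ℂ :=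
        fun k v => if k = n+1 then ((k.factorial : ℂ))⁻¹ * iterD k v P 1 else A k v with hA'
      have hAtop : A' (n+1) = fun v => (((n+1).factorial : ℂ))⁻¹ * iterD (n+1) v P 1 :=
        funext fun v => if_pos rfl
      have hAlow : ∀ k, k ≠ n+1 → A' k = A k := fun k hk => funext fun v => if_neg hk
      refine ⟨A', ?_, ?_⟩
      · intro k hk
        rcases eq_or_ne k (n+1) with rfl | hne
        · rw [hAtop]
          constructor
          · intro σ v
            exact congrArg (fun t => (((n+1).factorial : ℂ))⁻¹ * t) (iterD_perm (n+1) σ v P 1)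
          · intro v i y z
            show (((n+1).factorial : ℂ))⁻¹ * iterD (n+1) (Function.update v i (y*z)) P 1
              = (((n+1).factorial : ℂ))⁻¹ * iterD (n+1) (Function.update v i y) P 1
                + (((n+1).factorial : ℂ))⁻¹ * iterD (n+1) (Function.update v i z) P 1
            rw [c_addi hP v i y z]
            ring
        · rw [hAlow k hne]
          exact hA1 k (by omega)
      · intro x
        rw [Finset.sum_range_succ, hAtop]
        have : ∑ k ∈ Finset.range (n+1), A' k (fun _ => x)
            = ∑ k ∈ Finset.range (n+1), A k (fun _ => x) := by
          apply Finset.sum_congr rfl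
          intro k hk
          rw [hAlow k (by simp at hk; omega)]
        rw [this, ← hA2 x]
        show P x = (P x - Astar x) + (((n+1).factorial : ℂ))⁻¹ * iterD (n+1) (fun _ => x) P 1
        simp only [hAstar, hcA]
        ring
      
theorem degle_of_genpoly : ∀ (n : ℕ) (P : G → ℂ), IsGenPolyOfDegLE G n P → DegLE n P := by
  intro n P ⟨A, hA1, hA2⟩
  refine DegLE_congr n (fun x => (hA2 x).symm) ?_
  apply DegLE_sum
  intro k hk
  have hk' : k ≤ n := by simp at hk; omega
  exact DegLE_mono hk' (degle_diag (hA1 k hk').2)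

end MainEquiv

section Main

variable {F : Subfield ℂ}

lemma unit_ne (u : Fˣ) : (((u : F) : ℂ)) ≠ 0 := by
  intro hc
  have h0 : (u : F) = 0 := by exact_mod_cast hc
  exact u.ne_zero h0

lemma isDer_zero (F : Subfield ℂ) : ∀ n, IsDerOfOrder F n (fun _ => (0:ℂ)) := by
  intro n
  induction n with
  | zero => intro x; rfl
  | succ n ih =>
      refine ⟨fun x y => by ring, fun _ _ => 0, fun x => ih, fun y => ih, fun x y => by ring⟩

lemma main_aux (F : Subfield ℂ) : ∀ n, 1 ≤ n → ∀ D : F → ℂ,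
    IsDerOfOrder F n D ↔
      (∀ x y : F, D (x + y) = D x + D y) ∧
      D 1 = 0 ∧
      IsGenPolyOfDegLE Fˣ n (fun x : Fˣ => D (x : F) / ((x : F) : ℂ)) := by
  intro n hn
  induction n, hn using Nat.le_induction with
  | base =>
      intro D
      constructor
      · rintro ⟨hadd, B, hB1, hB2, hBeq⟩
        have hLeib : ∀ x y : F, D (x*y) = (x:ℂ) * D y + D x * (y:ℂ) := by
          intro x y
          have h0 : B x y = 0 := hB1 x y
          have h := hBeq x y
          rw [h0] at h
          linear_combination h
        have hD1 : D 1 = 0 := by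
          have h := hLeib 1 1
          simp only [mul_one, OneMemClass.coe_one, one_mul] at h
          linear_combination -h
        have hHom : ∀ u v : Fˣ, D ((u*v : Fˣ) : F) / (((u*v : Fˣ) : F) : ℂ)
            = D (u : F) / ((u : F):ℂ) + D (v : F) / ((v : F):ℂ) := by
          intro u v
          rw [Units.val_mul, hLeib]
          push_cast
          field_simp [unit_ne u, unit_ne v]
          ring
        refine ⟨hadd, hD1, ?_⟩
        set Afam : (k : ℕ) → (Fin k → Fˣ) → ℂ := fun k => if h : k = 1
          then (fun v : Fin k → Fˣ =>
            D ((v (Fin.cast h.symm 0) : F)) / (((v (Fin.cast h.symm 0)) : F) : ℂ))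
          else (fun _ => 0) with hAfam
        have hAf1 : ∀ v : Fin 1 → Fˣ, Afam 1 v = D ((v 0 : F)) / (((v 0) : F) : ℂ) :=
          fun v => rfl
        have hAf0 : ∀ v : Fin 0 → Fˣ, Afam 0 v = 0 := fun v => rfl
        refine ⟨Afam, ?_, ?_⟩
        · intro k hk
          rcases eq_or_ne k 1 with rfl | hne
          · constructor
            · intro σ x
              rw [hAf1, hAf1]
              have : σ 0 = 0 := Subsingleton.elim _ _
              simp only [Function.comp_apply, this]
            · intro x i y z
              rw [hAf1, hAf1, hAf1]
              have hi : ∀ a : Fˣ, Function.update x i a 0 = a := by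
                intro a
                rw [Subsingleton.elim (0 : Fin 1) i, Function.update_self]
              simp only [hi]
              exact hHom y z
          · have hk0 : k = 0 := by omega
            subst hk0
            constructor
            · intro σ x
              rw [hAf0, hAf0]
            · intro x i y z; exact i.elim0
        · intro u
          rw [Finset.sum_range_succ, Finset.sum_range_one, hAf0, hAf1]
          simp
      · rintro ⟨hadd, hD1, A, hA1, hA2⟩
        have hD0 : D 0 = 0 := by
          have := hadd 0 0
          simp only [add_zero] at this
          linear_combination -this
        have hupd : ∀ (x : Fin 1 → Fˣ) (i : Fin 1) (a : Fˣ),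
            Function.update x i a = fun _ => a := by
          intro x i a; funext j
          rw [Subsingleton.elim j i, Function.update_self]
        have hA1add : ∀ a b : Fˣ, A 1 (fun _ => a*b) = A 1 (fun _ => a) + A 1 (fun _ => b) := by
          intro a b
          have := (hA1 1 le_rfl).2 (fun _ => a) 0 a b
          simpa only [hupd] using this
        have hA1one : A 1 (fun _ => (1:Fˣ)) = 0 := by
          have := hA1add 1 1
          simp only [mul_one] at this
          linear_combination -this
        have hA0 : ∀ v : Fin 0 → Fˣ, A 0 v = 0 := by
          have h1 := hA2 1
          rw [Finset.sum_range_succ, Finset.sum_range_one, hA1one, add_zero] at h1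
          simp only [Units.val_one, OneMemClass.coe_one, hD1, zero_div] at h1
          intro v
          rw [show v = (fun _ => (1:Fˣ)) from funext fun i => i.elim0]
          exact h1.symm
        have hPhi : ∀ u : Fˣ, D (u : F) / ((u : F):ℂ) = A 1 (fun _ => u) := by
          intro u
          have h := hA2 u
          rw [Finset.sum_range_succ, Finset.sum_range_one, hA0, zero_add] at h
          exact h
        have hHom : ∀ u v : Fˣ, D ((u*v : Fˣ) : F) / (((u*v : Fˣ) : F) : ℂ)
            = D (u : F) / ((u : F):ℂ) + D (v : F) / ((v : F):ℂ) := by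
          intro u v
          rw [hPhi, hPhi, hPhi, hA1add]
        have hLeib : ∀ x y : F, D (x*y) = (x:ℂ) * D y + D x * (y:ℂ) := by
          intro x y
          rcases eq_or_ne x 0 with rfl | hx
          · simp only [zero_mul, hD0, ZeroMemClass.coe_zero, mul_zero, zero_add]
          rcases eq_or_ne y 0 with rfl | hy
          · simp only [mul_zero, hD0, ZeroMemClass.coe_zero, add_zero]
          have hx' : (x:ℂ) ≠ 0 := fun hc => hx (by exact_mod_cast hc)
          have hy' : (y:ℂ) ≠ 0 := fun hc => hy (by exact_mod_cast hc)
          have := hHom (Units.mk0 x hx) (Units.mk0 y hy)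
          rw [Units.val_mul] at this
          simp only [Units.val_mk0] at this
          push_cast at this
          field_simp at this
          linear_combination this
        exact ⟨hadd, (fun _ _ => 0), fun x => isDer_zero F 0, fun y => isDer_zero F 0,
          fun x y => by rw [hLeib x y]; ring⟩
  | succ n hn IH =>
      intro D
      constructor
      · rintro ⟨hadd, B, hB1, hB2, hBeq⟩
        have hD1 : D 1 = 0 := by
          have hB11 : B 1 1 = 0 := by
            have h := ((IH (fun x => B x 1)).mp (hB2 1)).2.1
            exact h
          have h := hBeq 1 1
          rw [hB11] at h
          simp only [mul_one, OneMemClass.coe_one, one_mul] at h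
          linear_combination -h
        refine ⟨hadd, hD1, ?_⟩
        apply genpoly_of_degle
        intro u
        obtain ⟨hEadd, hE1, hEgp⟩ := (IH (fun y => B (u : F) y)).mp (hB1 (u : F))
        have hEdeg := degle_of_genpoly n _ hEgp
        have key : ∀ v : Fˣ, dlt u (fun w : Fˣ => D (w : F) / ((w : F) : ℂ)) v
            = (((u : F) : ℂ))⁻¹ * (B (u : F) (v : F) / ((v : F) : ℂ))
              + D (u : F) / ((u : F) : ℂ) := by
          intro v
          have ha := unit_ne u
          have hb := unit_ne v
          have hB' := hBeq (u : F) (v : F)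
          have hD' : D ((u:F) * (v:F)) = B (u : F) (v : F) + ((u:F):ℂ) * D (v:F)
              + D (u:F) * ((v:F):ℂ) := by linear_combination hB'
          show D ((v*u : Fˣ) : F) / (((v*u : Fˣ) : F) : ℂ) - D (v : F) / ((v : F) : ℂ) = _
          rw [Units.val_mul, mul_comm ((v:Fˣ) : F) ((u:Fˣ) : F), hD']
          push_cast
          field_simp
          ring
        refine DegLE_congr n (fun v => (key v).symm) ?_
        exact DegLE_add n (DegLE_smul n _ hEdeg) (DegLE_const n _)
      · rintro ⟨hadd, hD1, hGP⟩
        have hdeg : DegLE (n+1) (fun x : Fˣ => D (x : F) / ((x : F) : ℂ)) :=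
          degle_of_genpoly (n+1) _ hGP
        have hD0 : D 0 = 0 := by
          have := hadd 0 0
          simp only [add_zero] at this
          linear_combination -this
        have claim : ∀ x : F, IsDerOfOrder F n
            (fun y => D (x*y) - (x:ℂ) * D y - D x * (y:ℂ)) := by
          intro x
          rcases eq_or_ne x 0 with rfl | hx
          · have : (fun y : F => D ((0:F)*y) - ((0:F):ℂ) * D y - D 0 * (y:ℂ))
                = fun _ => (0:ℂ) := by
              funext y
              simp only [zero_mul, hD0, ZeroMemClass.coe_zero]
              ring
            rw [this]
            exact isDer_zero F n
          · have hx' : (x:ℂ) ≠ 0 := fun hc => hx (by exact_mod_cast hc)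
            set u : Fˣ := Units.mk0 x hx with hu
            apply (IH (fun y => D (x*y) - (x:ℂ) * D y - D x * (y:ℂ))).mpr
            refine ⟨?_, ?_, ?_⟩
            · intro y z
              have h1 : x * (y + z) = x*y + x*z := by ring
              rw [h1, hadd (x*y) (x*z), hadd y z]
              push_cast
              ring
            · simp only [mul_one, OneMemClass.coe_one, hD1]
              ring
            · have key2 : ∀ v : Fˣ, (D (x * (v:F)) - (x:ℂ) * D (v:F) - D x * ((v:F):ℂ))
                  / ((v : F) : ℂ)
                  = ((u : F) : ℂ) * (dlt u (fun w : Fˣ => D (w : F) / ((w : F) : ℂ)) v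
                    - D (u : F) / ((u : F) : ℂ)) := by
                intro v
                have ha := unit_ne u
                have hb := unit_ne v
                show _ = ((u : F) : ℂ) * ((D ((v*u : Fˣ) : F) / (((v*u : Fˣ) : F) : ℂ)
                  - D (v : F) / ((v : F) : ℂ)) - D (u : F) / ((u : F) : ℂ))
                rw [Units.val_mul, mul_comm ((v:Fˣ) : F) ((u:Fˣ) : F)]
                have hux : ((u:Fˣ) : F) = x := rfl
                rw [hux]
                push_cast
                field_simp
              refine genpoly_of_degle n _ (DegLE_congr n (fun v => (key2 v).symm) ?_)
              exact DegLE_smul n _ (DegLE_sub n (hdeg u) (DegLE_const n _))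
        refine ⟨hadd, (fun x y => D (x*y) - (x:ℂ) * D y - D x * (y:ℂ)), claim, ?_, fun x y => rfl⟩
        intro y
        have : (fun x => D (x*y) - (x:ℂ) * D y - D x * (y:ℂ))
            = (fun x => D (y*x) - (y:ℂ) * D x - D y * (x:ℂ)) := by
          funext x
          rw [mul_comm x y]
          ring
        rw [this]
        exact claim y

end Main


/-- **Characterization of higher order derivations (Kiss–Laczkovich).**
Let `F ⊂ ℂ` be a field and `n` a positive integer.  A function `D : F → ℂ` is a derivation
of order `n` if and only if `D` is additive, `D(1) = 0`, and the map `x ↦ D(x)/x` from the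
multiplicative group `F^×` to `ℂ` is a generalized polynomial of degree at most `n`. -/
theorem higher_order_derivation_characterization
    (F : Subfield ℂ) (n : ℕ) (hn : 0 < n) (D : F → ℂ) :
    IsDerOfOrder F n D ↔
      (∀ x y : F, D (x + y) = D x + D y) ∧
      D 1 = 0 ∧
      IsGenPolyOfDegLE Fˣ n (fun x : Fˣ => D (x : F) / ((x : F) : ℂ)) := by
  exact main_aux F n hn D
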